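/- Let x ≤ n be natural numbers, π̄ = (x+1)/(n+2), H̄ = ((x+1)/(n+2))(H_{x+1} − H_{n+2}) + ((n−x+1)/(n+2))(H_{n−x+1} − H_{n+2}), and ψ = ((x+1)/(n+2)) H_{x+1} + ((n−x+1)/(n+2)) H_{n−x+1} − H_{n+2}, where H_k = ∑_{i=1}^k 1/i. Then the unique pair (q, q') with q, q' > 0 minimizing q + q' subject to π̄ log(q) + (1−π̄) log(q') = H̄ is given in closed form by q = ((x+1)/(n−x+1))^{(n−x+1)/(n+2)} e^ψ and q' = ((n−x+1)/(x+1))^{(x+1)/(n+2)} e^ψ. -/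

import Mathlib

set_option maxHeartbeats 1000000


/-- In the frequency model with logarithmic utility, with
`π̄ = (x+1)/(n+2)`,
`H̄ = ((x+1)/(n+2))(H_{x+1} − H_{n+2}) + ((n−x+1)/(n+2))(H_{n−x+1} − H_{n+2})` and
`ψ = ((x+1)/(n+2)) H_{x+1} + ((n−x+1)/(n+2)) H_{n−x+1} − H_{n+2}`,
the unique pair `(q, q')` of positive odds minimizing `q + q'` subject to
`π̄ log q + (1−π̄) log q' = H̄` is
`q = ((x+1)/(n−x+1))^((n−x+1)/(n+2)) e^ψ`, `q' = ((n−x+1)/(x+1))^((x+1)/(n+2)) e^ψ`. -/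
theorem frequency_log_utility_closed_form (x n : ℕ) (hxn : x ≤ n)
    (πbar Hbar ψ : ℝ)
    (hπbar : πbar = ((x : ℝ) + 1) / ((n : ℝ) + 2))
    (hHbar : Hbar = (((x : ℝ) + 1) / ((n : ℝ) + 2))
          * ((harmonic (x + 1) : ℝ) - (harmonic (n + 2) : ℝ))
        + (((n : ℝ) - (x : ℝ) + 1) / ((n : ℝ) + 2))
          * ((harmonic (n - x + 1) : ℝ) - (harmonic (n + 2) : ℝ)))
    (hψ : ψ = (((x : ℝ) + 1) / ((n : ℝ) + 2)) * (harmonic (x + 1) : ℝ)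
        + (((n : ℝ) - (x : ℝ) + 1) / ((n : ℝ) + 2)) * (harmonic (n - x + 1) : ℝ)
        - (harmonic (n + 2) : ℝ))
    (qopt qopt' : ℝ)
    (hqopt : qopt = (((x : ℝ) + 1) / ((n : ℝ) - (x : ℝ) + 1))
        ^ ((((n : ℝ) - (x : ℝ) + 1) / ((n : ℝ) + 2)) : ℝ) * Real.exp ψ)
    (hqopt' : qopt' = (((n : ℝ) - (x : ℝ) + 1) / ((x : ℝ) + 1))
        ^ (((((x : ℝ) + 1) / ((n : ℝ) + 2))) : ℝ) * Real.exp ψ) :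
    (0 < qopt ∧ 0 < qopt' ∧
      πbar * Real.log qopt + (1 - πbar) * Real.log qopt' = Hbar) ∧
    (∀ q q' : ℝ, 0 < q → 0 < q' →
      πbar * Real.log q + (1 - πbar) * Real.log q' = Hbar →
      qopt + qopt' ≤ q + q' ∧
      (q + q' = qopt + qopt' ↔ q = qopt ∧ q' = qopt')) := by
  have hxR : ((x : ℝ)) ≤ (n : ℝ) := by exact_mod_cast hxn
  have hA : (0:ℝ) < (x:ℝ) + 1 := by positivity
  have hB : (0:ℝ) < (n:ℝ) - (x:ℝ) + 1 := by linarith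
  have hN : (0:ℝ) < (n:ℝ) + 2 := by positivity
  have hABpos : (0:ℝ) < ((x:ℝ)+1) / ((n:ℝ) - (x:ℝ) + 1) := div_pos hA hB
  have hs : ((x:ℝ)+1)/((n:ℝ)+2) + ((n:ℝ)-(x:ℝ)+1)/((n:ℝ)+2) = 1 := by
    rw [← add_div, div_eq_one_iff_eq hN.ne']; ring
  -- ψ = Hbar
  have hHψ : Hbar = ψ := by
    rw [hHbar, hψ]
    linear_combination (-(harmonic (n+2) : ℝ)) * hs
  have hπ1 : 1 - πbar = ((n:ℝ)-(x:ℝ)+1)/((n:ℝ)+2) := by rw [hπbar]; linarith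
  -- positivity of qopt, qopt'
  have hqoptpos : 0 < qopt := by
    rw [hqopt]; positivity
  have hqopt'pos : 0 < qopt' := by
    rw [hqopt']; positivity
  -- logs of the optimum
  have hlogq : Real.log qopt
      = (((n:ℝ)-(x:ℝ)+1)/((n:ℝ)+2)) * Real.log (((x:ℝ)+1)/((n:ℝ)-(x:ℝ)+1)) + ψ := by
    rw [hqopt, Real.log_mul (by positivity) (Real.exp_ne_zero _),
      Real.log_rpow hABpos, Real.log_exp]
  have hlogq' : Real.log qopt'
      = -((((x:ℝ)+1)/((n:ℝ)+2)) * Real.log (((x:ℝ)+1)/((n:ℝ)-(x:ℝ)+1))) + ψ := by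
    rw [hqopt', Real.log_mul (by positivity) (Real.exp_ne_zero _),
      Real.log_rpow (div_pos hB hA), Real.log_exp,
      Real.log_div hB.ne' hA.ne', Real.log_div hA.ne' hB.ne']
    ring
  -- constraint holds at the optimum
  have hoptcon : πbar * Real.log qopt + (1 - πbar) * Real.log qopt' = Hbar := by
    rw [hlogq, hlogq', hHψ, hπ1, hπbar]
    linear_combination ψ * hs
  -- Lagrange ratio: qopt * B = qopt' * A
  have hratio : qopt * ((n:ℝ)-(x:ℝ)+1) = qopt' * ((x:ℝ)+1) := by
    have hkey : (((x:ℝ)+1)/((n:ℝ)-(x:ℝ)+1)) ^ ((((n:ℝ)-(x:ℝ)+1)/((n:ℝ)+2)) : ℝ)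
        * (((x:ℝ)+1)/((n:ℝ)-(x:ℝ)+1)) ^ (((((x:ℝ)+1)/((n:ℝ)+2))) : ℝ)
        = ((x:ℝ)+1)/((n:ℝ)-(x:ℝ)+1) := by
      rw [← Real.rpow_add hABpos]
      rw [show ((n:ℝ)-(x:ℝ)+1)/((n:ℝ)+2) + ((x:ℝ)+1)/((n:ℝ)+2) = 1 by linarith]
      exact Real.rpow_one _
    have hkey2 : (((x:ℝ)+1)/((n:ℝ)-(x:ℝ)+1)) ^ ((((n:ℝ)-(x:ℝ)+1)/((n:ℝ)+2)) : ℝ)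
        * (((x:ℝ)+1)/((n:ℝ)-(x:ℝ)+1)) ^ (((((x:ℝ)+1)/((n:ℝ)+2))) : ℝ)
        * ((n:ℝ)-(x:ℝ)+1) = (x:ℝ)+1 := by
      rw [hkey]; field_simp
    have hinv : (((n:ℝ)-(x:ℝ)+1)/((x:ℝ)+1)) ^ (((((x:ℝ)+1)/((n:ℝ)+2))) : ℝ)
        = ((((x:ℝ)+1)/((n:ℝ)-(x:ℝ)+1)) ^ (((((x:ℝ)+1)/((n:ℝ)+2))) : ℝ))⁻¹ := by
      rw [show ((n:ℝ)-(x:ℝ)+1)/((x:ℝ)+1) = (((x:ℝ)+1)/((n:ℝ)-(x:ℝ)+1))⁻¹ by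
        rw [inv_div]]
      exact Real.inv_rpow hABpos.le _
    have hpow2 : (0:ℝ) < (((x:ℝ)+1)/((n:ℝ)-(x:ℝ)+1)) ^ (((((x:ℝ)+1)/((n:ℝ)+2))) : ℝ) :=
      Real.rpow_pos_of_pos hABpos _
    rw [hqopt, hqopt', hinv]
    field_simp
    linear_combination hkey2
  have hqoptA : qopt = πbar * (qopt + qopt') := by
    rw [hπbar, div_mul_eq_mul_div, eq_div_iff hN.ne']
    linear_combination hratio
  have hqoptB : qopt' = (1 - πbar) * (qopt + qopt') := by
    rw [hπ1, div_mul_eq_mul_div, eq_div_iff hN.ne']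
    linear_combination -hratio
  refine ⟨⟨hqoptpos, hqopt'pos, hoptcon⟩, ?_⟩
  intro q q' hq hq' hcon
  set u : ℝ := Real.log q - Real.log qopt with hu
  set v : ℝ := Real.log q' - Real.log qopt' with hv
  have hqe : q = qopt * Real.exp u := by
    rw [hu, Real.exp_sub, Real.exp_log hq, Real.exp_log hqoptpos]
    field_simp
  have hq'e : q' = qopt' * Real.exp v := by
    rw [hv, Real.exp_sub, Real.exp_log hq', Real.exp_log hqopt'pos]
    field_simp
  have hlin : πbar * u + (1 - πbar) * v = 0 := by
    rw [hu, hv]; linear_combination hcon - hoptcon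
  have hcoef : qopt * u + qopt' * v = 0 := by
    linear_combination (qopt + qopt') * hlin + u * hqoptA + v * hqoptB
  have e1 : qopt * (u + 1) ≤ qopt * Real.exp u :=
    mul_le_mul_of_nonneg_left (Real.add_one_le_exp u) hqoptpos.le
  have e2 : qopt' * (v + 1) ≤ qopt' * Real.exp v :=
    mul_le_mul_of_nonneg_left (Real.add_one_le_exp v) hqopt'pos.le
  have hge : qopt + qopt' ≤ q + q' := by
    rw [hqe, hq'e]
    nlinarith [e1, e2, hcoef]
  refine ⟨hge, ?_, ?_⟩
  · intro heq
    have hu0 : u = 0 := by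
      by_contra h
      have e1' : qopt * (u + 1) < qopt * Real.exp u :=
        (mul_lt_mul_iff_right₀ hqoptpos).2 (Real.add_one_lt_exp h)
      rw [hqe, hq'e] at heq
      nlinarith [e1', e2, hcoef, heq]
    have hv0 : v = 0 := by
      rw [hu0] at hcoef
      have h0 : qopt' * v = 0 := by linarith
      rcases mul_eq_zero.mp h0 with h | h
      · exact absurd h hqopt'pos.ne'
      · exact h
    constructor
    · rw [hqe, hu0, Real.exp_zero, mul_one]
    · rw [hq'e, hv0, Real.exp_zero, mul_one]
  · rintro ⟨h1, h2⟩
    rw [h1, h2]
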